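/- Let X be an affine complex with tame generic discrete Morse function F, sharp piecewise affine metric, and associated pl function f on the barycentric subdivision X₁. Let q be an (i−1)-dimensional vertex and p an adjacent i-dimensional vertex with f(q) > f(p). Then the cell σ_p of X corresponding to p is entirely swept by gradient trajectories of f starting at q. -/

import Mathlib

open EuclideanGeometry Real

/-- A geometric model of the barycentric subdivision `X₁` of a finite affine complex `X`,
affinely embedded in a Euclidean space.  The vertices `V` of `X₁` correspond to the cells
of `X`; `vdim u` is the dimension of the cell of `X` corresponding to `u` and `F u` the
value of the discrete Morse function on that cell.  The simplices of `X₁` are flags of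
incident cells of `X` (so two vertices span an edge iff the corresponding cells are
incident), and the piecewise linear function `f` is the affine extension of the vertex
values `F`. -/
structure PLComplex where
  N : ℕ
  V : Type
  [fintypeV : Fintype V]
  [decEqV : DecidableEq V]
  pos : V → EuclideanSpace ℝ (Fin N)
  vdim : V → ℕ
  F : V → ℝ
  simplices : Finset (Finset V)
  nonempty_mem : ∀ s ∈ simplices, s.Nonempty
  down_closed : ∀ s ∈ simplices, ∀ t ⊆ s, t.Nonempty → t ∈ simplices
  singleton_mem : ∀ u : V, {u} ∈ simplices
  indep : ∀ s ∈ simplices, AffineIndependent ℝ (fun x : ↥s => pos x)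
  flag : ∀ s ∈ simplices, ∀ u ∈ s, ∀ w ∈ s, u ≠ w → vdim u ≠ vdim w

attribute [instance] PLComplex.fintypeV PLComplex.decEqV

namespace PLComplex

variable (C : PLComplex)

/-- The geometric realization of a simplex of `X₁`. -/
def geom (s : Finset C.V) : Set (EuclideanSpace ℝ (Fin C.N)) :=
  convexHull ℝ (C.pos '' ↑s)

/-- Two vertices of `X₁` are adjacent iff they span an edge, i.e. the corresponding cells
of `X` are incident. -/
def Adj (u w : C.V) : Prop :=
  u ≠ w ∧ ∃ s ∈ C.simplices, u ∈ s ∧ w ∈ s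

/-- `F` is a discrete Morse function on the underlying complex `X`. -/
def IsDiscreteMorse : Prop :=
  ∀ u : C.V,
    {w | C.Adj u w ∧ C.vdim w = C.vdim u + 1 ∧ C.F w ≤ C.F u}.Subsingleton ∧
    {w | C.Adj u w ∧ C.vdim w + 1 = C.vdim u ∧ C.F u ≤ C.F w}.Subsingleton

/-- `F` is generic: distinct values on incident cells. -/
def Generic : Prop := ∀ u w : C.V, C.Adj u w → C.F u ≠ C.F w

/-- `F` is tame: a face of codimension at least two has strictly smaller value. -/
def Tame : Prop :=
  ∀ u w : C.V, C.Adj u w → C.vdim u + 2 ≤ C.vdim w → C.F u < C.F w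

/-- The vertex `u` of `X₁` is critical: the corresponding cell of `X` is critical for
the discrete Morse function `F`. -/
def Critical (u : C.V) : Prop :=
  (¬ ∃ w, C.Adj u w ∧ C.vdim w = C.vdim u + 1 ∧ C.F w ≤ C.F u) ∧
  (¬ ∃ w, C.Adj u w ∧ C.vdim w + 1 = C.vdim u ∧ C.F u ≤ C.F w)

/-- The (Euclidean) piecewise affine metric is sharp: every 2-plane section through a
vertex of a simplex that cuts out a nondegenerate triangle is acute-angled. -/
def Sharp : Prop :=
  ∀ s ∈ C.simplices, ∀ a ∈ C.pos '' ↑s, ∀ b c : EuclideanSpace ℝ (Fin C.N),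
    AffineIndependent ℝ ![a, b, c] →
    (∃ L : AffineSubspace ℝ (EuclideanSpace ℝ (Fin C.N)), a ∈ L ∧
      Module.finrank ℝ L.direction = 2 ∧
      (L : Set (EuclideanSpace ℝ (Fin C.N))) ∩ C.geom s = convexHull ℝ {a, b, c}) →
    ∠ b a c < π / 2 ∧ ∠ a b c < π / 2 ∧ ∠ a c b < π / 2

/-- `u` is the negative gradient (in the Euclidean metric) of the affine extension `f` of
the vertex values `F` restricted to the simplex `s`. -/
def IsNegGradOn (s : Finset C.V) (u : EuclideanSpace ℝ (Fin C.N)) : Prop :=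
  u ∈ vectorSpan ℝ (C.pos '' ↑s) ∧
  ∀ a ∈ s, ∀ b ∈ s, (inner ℝ u (C.pos a - C.pos b) : ℝ) = C.F b - C.F a

/-- A gradient trajectory of the piecewise linear function `f` on `X₁`: a concatenation of
`k` affine segments, the `l`-th defined on `[t l, t (l+1)]`, each contained in a simplex of
`X₁` and with constant derivative the negative gradient of `f` on that simplex. -/
def IsTraj (k : ℕ) (t : ℕ → ℝ) (γ : ℝ → EuclideanSpace ℝ (Fin C.N)) : Prop :=
  (∀ l < k, t l ≤ t (l + 1)) ∧
  ∀ l < k, ∃ s ∈ C.simplices, ∃ u, C.IsNegGradOn s u ∧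
    ∀ r ∈ Set.Icc (t l) (t (l + 1)),
      γ r ∈ C.geom s ∧ γ r = γ (t l) + (r - t l) • u

/-- The `i`-th rib `X₁^{(i)}`: the barycentric subdivision of the `i`-skeleton of `X`,
i.e. the union of the simplices of `X₁` all of whose vertices correspond to cells of
dimension at most `i`. -/
def rib (i : ℕ) : Set (EuclideanSpace ℝ (Fin C.N)) :=
  ⋃ s ∈ {s | s ∈ C.simplices ∧ ∀ u ∈ s, C.vdim u ≤ i}, C.geom s

/-- The closed cell of `X` corresponding to the vertex `p` of `X₁`: the union of the
simplices of `X₁` containing `p` whose vertices all have dimension at most `vdim p`. -/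
def cellOf (p : C.V) : Set (EuclideanSpace ℝ (Fin C.N)) :=
  ⋃ s ∈ {s | s ∈ C.simplices ∧ p ∈ s ∧ ∀ u ∈ s, C.vdim u ≤ C.vdim p}, C.geom s

lemma exists_negGrad {s : Finset C.V} (hs : s ∈ C.simplices) :
    ∃ u, C.IsNegGradOn s u := by
  classical
  obtain ⟨b₀, hb₀⟩ := C.nonempty_mem s hs
  set p₀ := C.pos b₀ with hp₀
  set v : {a : ↥s // a ≠ ⟨b₀, hb₀⟩} → EuclideanSpace ℝ (Fin C.N) :=
    fun a => C.pos a.1 - p₀ with hv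
  have hli : LinearIndependent ℝ v := by
    have := (affineIndependent_iff_linearIndependent_vsub ℝ
      (fun x : ↥s => C.pos ↑x) ⟨b₀, hb₀⟩).mp (C.indep s hs)
    simpa [hv, vsub_eq_sub] using this
  set S := Submodule.span ℝ (Set.range v) with hS
  have hSW : S = vectorSpan ℝ (C.pos '' ↑s) := by
    apply le_antisymm
    · rw [hS, Submodule.span_le]; rintro _ ⟨a, rfl⟩
      simpa [hv, vsub_eq_sub] using
        vsub_mem_vectorSpan ℝ (Set.mem_image_of_mem C.pos a.1.2)
          (Set.mem_image_of_mem C.pos hb₀)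
    · rw [vectorSpan_eq_span_vsub_set_right ℝ (Set.mem_image_of_mem C.pos (Finset.mem_coe.mpr hb₀)),
        Submodule.span_le]
      rintro _ ⟨_, ⟨a, ha, rfl⟩, rfl⟩
      by_cases hab : a = b₀
      · subst hab; simp only [vsub_eq_sub, hp₀, sub_self]; exact Submodule.zero_mem S
      · exact Submodule.subset_span
          ⟨⟨⟨a, ha⟩, by simp [Subtype.ext_iff, hab]⟩, by simp [hv, vsub_eq_sub, hp₀]⟩
  set φ : ↥S →ₗ[ℝ] ℝ := (Module.Basis.span hli).constr ℝ (fun a => C.F b₀ - C.F a.1.1) with hφdef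
  set u₀ := (InnerProductSpace.toDual ℝ ↥S).symm (LinearMap.toContinuousLinearMap φ) with hu₀
  have hinner : ∀ w : ↥S, (inner ℝ (u₀ : EuclideanSpace ℝ (Fin C.N)) (w : EuclideanSpace ℝ (Fin C.N)) : ℝ) = φ w := by
    intro w
    rw [← Submodule.coe_inner]
    simpa [hu₀] using InnerProductSpace.toDual_symm_apply (x := w)
      (y := LinearMap.toContinuousLinearMap φ)
  have hmem : ∀ a ∈ s, C.pos a - p₀ ∈ S := by
    intro a ha
    rw [hSW]
    simpa [vsub_eq_sub] using
      vsub_mem_vectorSpan ℝ (Set.mem_image_of_mem C.pos ha) (Set.mem_image_of_mem C.pos hb₀)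
  have hφ : ∀ a (ha : a ∈ s), φ ⟨C.pos a - p₀, hmem a ha⟩ = C.F b₀ - C.F a := by
    intro a ha
    by_cases hab : a = b₀
    · subst hab
      have h0 : (⟨C.pos a - p₀, hmem a ha⟩ : ↥S) = 0 := by
        apply Subtype.ext; simp [hp₀]
      rw [h0, map_zero, sub_self]
    · have hne : (⟨a, ha⟩ : ↥s) ≠ ⟨b₀, hb₀⟩ := by simp [Subtype.ext_iff, hab]
      have heq : (⟨C.pos a - p₀, hmem a ha⟩ : ↥S) = (Module.Basis.span hli) ⟨⟨a, ha⟩, hne⟩ :=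
        Subtype.ext (by simp [Module.Basis.span_apply, hv])
      rw [heq, hφdef, Module.Basis.constr_basis]
  refine ⟨(u₀ : EuclideanSpace ℝ (Fin C.N)), ?_, ?_⟩
  · rw [← hSW]; exact u₀.2
  · intro a ha b hb
    have hsplit : C.pos a - C.pos b = (C.pos a - p₀) - (C.pos b - p₀) := by abel
    rw [hsplit, inner_sub_right]
    have h1 := hinner ⟨C.pos a - p₀, hmem a ha⟩
    have h2 := hinner ⟨C.pos b - p₀, hmem b hb⟩
    simp only [Submodule.coe_mk] at h1 h2
    rw [h1, h2, hφ a ha, hφ b hb]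
    ring

lemma geom_mono {s t : Finset C.V} (h : s ⊆ t) : C.geom s ⊆ C.geom t :=
  convexHull_mono (Set.image_mono (by exact_mod_cast h))

lemma exit_lemma {s : Finset C.V} (hs : s ∈ C.simplices)
    {u x : EuclideanSpace ℝ (Fin C.N)} (hu : C.IsNegGradOn s u) (hune : u ≠ 0)
    (hx : x ∈ C.geom s) :
    ∃ v ∈ s, ∃ r₀ : ℝ, 0 ≤ r₀ ∧ x - r₀ • u ∈ C.geom (s.erase v) := by
  classical
  set G := C.geom s with hG
  have hGcp : IsCompact G := (Set.Finite.isCompact_convexHull ℝ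
    ((s.finite_toSet).image C.pos))
  have hGcl : IsClosed G := hGcp.isClosed
  set R : Set ℝ := {r | 0 ≤ r ∧ x - r • u ∈ G} with hR
  have hRcl : IsClosed R := by
    have h1 : Continuous fun r : ℝ => x - r • u := continuous_const.sub (continuous_id.smul continuous_const)
    exact (isClosed_Ici.inter (hGcl.preimage h1))
  obtain ⟨M, hM⟩ := isBounded_iff_forall_norm_le.mp hGcp.isBounded
  have hRbd : R ⊆ Set.Icc 0 ((‖x‖ + M) / ‖u‖) := by
    rintro r ⟨hr0, hrG⟩
    refine ⟨hr0, ?_⟩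
    have hn : ‖u‖ ≠ 0 := by simpa using hune
    rw [le_div_iff₀ (by positivity)]
    have : ‖r • u‖ = ‖x - (x - r • u)‖ := by congr 1; abel
    calc r * ‖u‖ = ‖r • u‖ := by
          rw [norm_smul, Real.norm_eq_abs, abs_of_nonneg hr0]
      _ = ‖x - (x - r • u)‖ := this
      _ ≤ ‖x‖ + ‖x - r • u‖ := norm_sub_le _ _
      _ ≤ ‖x‖ + M := by linarith [hM _ hrG]
  have hRcp : IsCompact R := (isCompact_Icc.of_isClosed_subset hRcl hRbd)
  have hRne : R.Nonempty := ⟨0, le_refl 0, by simpa using hx⟩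
  obtain ⟨r₀, ⟨hr₀0, hyG⟩, hub⟩ := hRcp.exists_isGreatest hRne
  set y := x - r₀ • u with hy
  -- barycentric coordinates of y
  have hyhull : y ∈ convexHull ℝ (↑(s.image C.pos) : Set (EuclideanSpace ℝ (Fin C.N))) := by
    rwa [Finset.coe_image]
  rw [Finset.convexHull_eq] at hyhull
  obtain ⟨w, hwpos, hwsum, hwcm⟩ := hyhull
  by_cases hpos : ∀ z ∈ s.image C.pos, 0 < w z
  · -- all barycentric coordinates positive: contradiction with maximality
    exfalso
    obtain ⟨b₀, hb₀⟩ := C.nonempty_mem s hs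
    set T := s.image C.pos with hT
    set p₀ := C.pos b₀ with hp₀
    have hp₀T : p₀ ∈ T := Finset.mem_image_of_mem C.pos hb₀
    have hTne : T.Nonempty := ⟨p₀, hp₀T⟩
    have humem : u ∈ Submodule.span ℝ (↑(T.image (fun z => z - p₀)) :
        Set (EuclideanSpace ℝ (Fin C.N))) := by
      have h1 := hu.1
      rw [vectorSpan_eq_span_vsub_set_right ℝ
        (Set.mem_image_of_mem C.pos (Finset.mem_coe.mpr hb₀))] at h1
      rw [Finset.coe_image, hT, Finset.coe_image]
      simpa [vsub_eq_sub] using h1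
    obtain ⟨f, -, hf⟩ := Submodule.mem_span_finset.mp humem
    have hinj : ∀ z₁ ∈ T, ∀ z₂ ∈ T, z₁ - p₀ = z₂ - p₀ → z₁ = z₂ := by
      intro z₁ _ z₂ _ h; have := sub_left_injective h; exact this
    rw [Finset.sum_image hinj] at hf
    set c : EuclideanSpace ℝ (Fin C.N) → ℝ := fun z => f (z - p₀) with hc
    set A : ℝ := ∑ z ∈ T, c z with hA
    set d : EuclideanSpace ℝ (Fin C.N) → ℝ :=
      fun z => c z - (if z = p₀ then A else 0) with hd
    have hdsum : ∑ z ∈ T, d z = 0 := by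
      rw [hd]
      rw [Finset.sum_sub_distrib, Finset.sum_ite_eq' T p₀ (fun _ => A), if_pos hp₀T, hA]
      ring
    have hdrep : ∑ z ∈ T, d z • z = u := by
      have : ∀ z ∈ T, d z • z = c z • (z - p₀) + (c z • p₀ - (if z = p₀ then A • z else 0)) := by
        intro z _
        by_cases h : z = p₀ <;> simp [hd, h, sub_smul, smul_sub] <;> abel
      rw [Finset.sum_congr rfl this, Finset.sum_add_distrib, hf,
        Finset.sum_sub_distrib, ← Finset.sum_smul, ← hA,
        Finset.sum_ite_eq' T p₀ (fun z => A • z), if_pos hp₀T]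
      simp [hp₀]
    set ε : ℝ := T.inf' hTne (fun z => w z / (|d z| + 1)) with hε
    have hεpos : 0 < ε := by
      rw [hε, Finset.lt_inf'_iff]
      intro z hz
      exact div_pos (hpos z hz) (by positivity)
    have hcoef : ∀ z ∈ T, 0 ≤ w z - ε * d z := by
      intro z hz
      have h1 : ε ≤ w z / (|d z| + 1) := Finset.inf'_le _ hz
      have h2 : ε * d z ≤ w z := by
        calc ε * d z ≤ ε * |d z| := mul_le_mul_of_nonneg_left (le_abs_self _) hεpos.le
          _ ≤ (w z / (|d z| + 1)) * (|d z| + 1) := by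
              exact mul_le_mul h1 (by linarith) (abs_nonneg _)
                (div_nonneg (hwpos z hz) (by positivity))
          _ = w z := div_mul_cancel₀ _ (by positivity)
      linarith
    have hysum : ∑ z ∈ T, w z • z = y := by
      have := Finset.centerMass_eq_of_sum_1 T id hwsum
      rw [this] at hwcm
      simpa using hwcm
    have hrep : x - (r₀ + ε) • u = ∑ z ∈ T, (w z - ε * d z) • z := by
      have h1 : ∑ z ∈ T, (w z - ε * d z) • z
          = ∑ z ∈ T, w z • z - ε • ∑ z ∈ T, d z • z := by
        rw [Finset.smul_sum, ← Finset.sum_sub_distrib]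
        apply Finset.sum_congr rfl
        intro z _
        rw [sub_smul, smul_smul]
      rw [h1, hdrep, hysum, hy, add_smul]
      abel
    have hsum2 : ∑ z ∈ T, (w z - ε * d z) = 1 := by
      rw [Finset.sum_sub_distrib, ← Finset.mul_sum, hdsum, hwsum]
      ring
    have hmem2 : x - (r₀ + ε) • u ∈ G := by
      have hmem := Finset.centerMass_mem_convexHull T hcoef
        (by rw [hsum2]; norm_num) (fun i (hi : i ∈ T) => Finset.mem_coe.mpr hi)
      rw [show (fun i : EuclideanSpace ℝ (Fin C.N) => i) = id from rfl,
        Finset.centerMass_eq_of_sum_1 T id hsum2] at hmem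
      simp only [id] at hmem
      rw [← hrep] at hmem
      rw [hG]
      unfold geom
      rw [← Finset.coe_image, ← hT]
      exact hmem
    have : r₀ + ε ∈ R := ⟨by linarith, hmem2⟩
    have := hub this
    linarith
  · push_neg at hpos
    obtain ⟨z, hz, hz0⟩ := hpos
    have hz0' : w z = 0 := le_antisymm (by linarith [hz0]) (hwpos z hz)
    obtain ⟨v, hv, rfl⟩ := Finset.mem_image.mp hz
    refine ⟨v, hv, r₀, hr₀0, ?_⟩
    have hsub : (↑((s.image C.pos).erase (C.pos v)) : Set (EuclideanSpace ℝ (Fin C.N)))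
        ⊆ C.pos '' ↑(s.erase v) := by
      intro z' hz'
      obtain ⟨hzne, hzmem⟩ := Finset.mem_erase.mp (Finset.mem_coe.mp hz')
      obtain ⟨a, ha, rfl⟩ := Finset.mem_image.mp hzmem
      exact ⟨a, Finset.mem_coe.mpr (Finset.mem_erase.mpr ⟨fun h => hzne (by rw [h]), ha⟩), rfl⟩
    apply convexHull_mono hsub
    have hsum' : ∑ z' ∈ (s.image C.pos).erase (C.pos v), w z' = 1 := by
      rw [Finset.sum_erase _ hz0', hwsum]
    have hcm : ((s.image C.pos).erase (C.pos v)).centerMass w id = y := by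
      rw [← hwcm]
      unfold Finset.centerMass
      rw [hsum', hwsum, Finset.sum_erase]
      simp [hz0']
    have hmem := Finset.centerMass_mem_convexHull ((s.image C.pos).erase (C.pos v))
      (fun i hi => hwpos i (Finset.mem_of_mem_erase hi))
      (by rw [hsum']; norm_num) (fun i (hi : i ∈ _) => Finset.mem_coe.mpr hi)
    rw [show (fun i : EuclideanSpace ℝ (Fin C.N) => i) = id from rfl, hcm] at hmem
    exact hmem

def Reach (q : C.V) (x : EuclideanSpace ℝ (Fin C.N)) : Prop :=
  ∃ (k : ℕ) (t : ℕ → ℝ) (γ : ℝ → EuclideanSpace ℝ (Fin C.N)),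
    C.IsTraj k t γ ∧ γ (t 0) = C.pos q ∧ γ (t k) = x

lemma traj_mono {k : ℕ} {t : ℕ → ℝ} (h : ∀ l < k, t l ≤ t (l + 1)) :
    ∀ j ≤ k, ∀ i ≤ j, t i ≤ t j := by
  intro j hj
  induction j with
  | zero =>
    intro i hi
    have : i = 0 := by omega
    subst this; exact le_refl _
  | succ n ih =>
    intro i hi
    rcases Nat.lt_or_ge i (n + 1) with hlt | hge
    · exact le_trans (ih (by omega) i (by omega)) (h n (by omega))
    · have : i = n + 1 := by omega
      subst this; rfl

lemma reach_self (q : C.V) : C.Reach q (C.pos q) := by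
  refine ⟨0, fun _ => 0, fun _ => C.pos q, ⟨?_, ?_⟩, rfl, rfl⟩
  · intro l hl; omega
  · intro l hl; omega

lemma Reach.step {q : C.V} {y u : EuclideanSpace ℝ (Fin C.N)} {s : Finset C.V}
    (hy : C.Reach q y) (hs : s ∈ C.simplices) (hu : C.IsNegGradOn s u) {r₀ : ℝ}
    (hr₀ : 0 ≤ r₀) (hys : y ∈ C.geom s) (hxs : y + r₀ • u ∈ C.geom s) :
    C.Reach q (y + r₀ • u) := by
  obtain ⟨k, t, γ, ⟨htm, hseg⟩, h0, hk⟩ := hy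
  have hmono := traj_mono htm
  refine ⟨k + 1, fun l => if l ≤ k then t l else t k + r₀,
    fun r => if r ≤ t k then γ r else y + (r - t k) • u, ⟨?_, ?_⟩, ?_, ?_⟩
  · intro l hl
    rcases Nat.lt_or_ge l k with hlt | hge
    · simp only [if_pos (Nat.le_of_lt hlt), if_pos (Nat.succ_le_of_lt hlt)]
      exact htm l hlt
    · have hl' : l = k := by omega
      subst hl'
      simp only [le_refl, if_pos, if_neg (by omega : ¬ l + 1 ≤ l)]
      linarith
  · intro l hl
    rcases Nat.lt_or_ge l k with hlt | hge
    · obtain ⟨s', hs', u', hu', hseg'⟩ := hseg l hlt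
      refine ⟨s', hs', u', hu', ?_⟩
      intro r hr
      dsimp only at hr ⊢
      rw [if_pos (Nat.le_of_lt hlt), if_pos (Nat.succ_le_of_lt hlt)] at hr
      have hrk : r ≤ t k := le_trans hr.2 (hmono k le_rfl (l+1) (by omega))
      have htlk : t l ≤ t k := hmono k le_rfl l (by omega)
      rw [if_pos hrk, if_pos (Nat.le_of_lt hlt), if_pos htlk]
      exact hseg' r hr
    · have hl' : l = k := by omega
      subst hl'
      refine ⟨s, hs, u, hu, ?_⟩
      intro r hr
      dsimp only at hr ⊢
      rw [if_pos (le_refl l), if_neg (by omega : ¬ l + 1 ≤ l)] at hr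
      rw [if_pos (le_refl l)]
      rcases le_or_gt r (t l) with hrl | hrl
      · have hreq : r = t l := le_antisymm hrl hr.1
        subst hreq
        rw [if_pos (le_refl (t l)), hk]
        exact ⟨hys, by simp⟩
      · rw [if_neg (not_le.mpr hrl), if_pos (le_refl (t l)), hk]
        constructor
        · -- y + (r - t l) • u ∈ geom s by convexity
          have hconv := convex_convexHull ℝ (C.pos '' (↑s : Set C.V))
          have hr₀pos : 0 < r₀ := by
            rcases hr₀.lt_or_eq with h | h
            · exact h
            · exfalso; rw [← h] at hr; linarith [hr.2]
          set θ := (r - t l) / r₀ with hθ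
          have hθ0 : 0 ≤ θ := div_nonneg (by linarith) hr₀
          have hθ1 : θ ≤ 1 := by
            rw [hθ, div_le_one hr₀pos]; linarith [hr.2]
          have := hconv hys hxs (by linarith : (0:ℝ) ≤ 1 - θ) hθ0 (by ring)
          have heq : (1 - θ) • y + θ • (y + r₀ • u) = y + (r - t l) • u := by
            rw [smul_add, ← add_assoc, ← add_smul, sub_add_cancel, one_smul,
              smul_smul, hθ, div_mul_cancel₀ _ (ne_of_gt hr₀pos)]
          rwa [heq] at this
        · rfl
  · have h0k : t 0 ≤ t k := hmono k le_rfl 0 (by omega)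
    dsimp only
    rw [if_pos (Nat.zero_le k), if_pos h0k, h0]
  · dsimp only
    rw [if_neg (by omega : ¬ k + 1 ≤ k)]
    rcases hr₀.lt_or_eq with h | h
    · rw [if_neg (by linarith : ¬ t k + r₀ ≤ t k)]
      simp
    · rw [← h]
      simp only [add_zero, le_refl, if_pos, hk]
      simp [← h]

lemma reach_edge {q a b : C.V} (hab : ({a, b} : Finset C.V) ∈ C.simplices)
    (hFv : C.F b < C.F a) (hra : C.Reach q (C.pos a)) : C.Reach q (C.pos b) := by
  classical
  have hne : a ≠ b := by rintro rfl; exact lt_irrefl _ hFv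
  have hma : a ∈ ({a, b} : Finset C.V) := Finset.mem_insert_self a {b}
  have hmb : b ∈ ({a, b} : Finset C.V) :=
    Finset.mem_insert_of_mem (Finset.mem_singleton_self b)
  have hpne : C.pos a ≠ C.pos b := by
    intro h
    have hinj := (C.indep _ hab).injective
    have := hinj (a₁ := ⟨a, hma⟩) (a₂ := ⟨b, hmb⟩) h
    exact hne (Subtype.ext_iff.mp this)
  set d := C.pos b - C.pos a with hdd
  have hd0 : d ≠ 0 := sub_ne_zero.mpr (Ne.symm hpne)
  have hnd : (0:ℝ) < ‖d‖^2 := pow_pos (norm_pos_iff.mpr hd0) 2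
  set c := (C.F a - C.F b) / ‖d‖^2 with hc
  have hcpos : 0 < c := div_pos (by linarith) hnd
  set u := c • d with huu
  have hkey : (inner ℝ u d : ℝ) = C.F a - C.F b := by
    rw [huu, real_inner_smul_left, real_inner_self_eq_norm_sq, hc,
      div_mul_cancel₀ _ (ne_of_gt hnd)]
  have hu : C.IsNegGradOn {a, b} u := by
    constructor
    · apply Submodule.smul_mem
      have := vsub_mem_vectorSpan ℝ (Set.mem_image_of_mem C.pos (Finset.mem_coe.mpr hmb))
        (Set.mem_image_of_mem C.pos (Finset.mem_coe.mpr hma))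
      simpa [vsub_eq_sub] using this
    · intro a' ha' b' hb'
      have hsplit : ∀ z ∈ ({a, b} : Finset C.V), z = a ∨ z = b := by
        intro z hz
        rcases Finset.mem_insert.mp hz with h | h
        · exact Or.inl h
        · exact Or.inr (Finset.mem_singleton.mp h)
      rcases hsplit a' ha' with rfl | rfl <;> rcases hsplit b' hb' with rfl | rfl
      · simp
      · have : C.pos a' - C.pos b' = -d := by rw [hdd]; try abel
        rw [this, inner_neg_right, hkey]
        try ring
      · have : C.pos a' - C.pos b' = d := by rw [hdd]; try abel
        rw [this, hkey]
        try ring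
      · simp
  have hstep := Reach.step C hra hab hu (r₀ := 1/c) (by positivity)
    (subset_convexHull ℝ _ (Set.mem_image_of_mem C.pos (Finset.mem_coe.mpr hma)))
    (by
      have : C.pos a + (1/c) • u = C.pos b := by
        rw [huu, smul_smul, one_div, inv_mul_cancel₀ (ne_of_gt hcpos), one_smul, hdd]
        abel
      rw [this]
      exact subset_convexHull ℝ _ (Set.mem_image_of_mem C.pos (Finset.mem_coe.mpr hmb)))
  have heq : C.pos a + (1/c) • u = C.pos b := by
    rw [huu, smul_smul, one_div, inv_mul_cancel₀ (ne_of_gt hcpos), one_smul, hdd]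
    abel
  rwa [heq] at hstep

lemma reach_vertex (hDM : C.IsDiscreteMorse) (hgen : C.Generic) (htame : C.Tame)
    {p q : C.V} (hadj : C.Adj q p) (hdim : C.vdim q + 1 = C.vdim p)
    (hval : C.F p < C.F q) {s : Finset C.V} (hs : s ∈ C.simplices) (hps : p ∈ s)
    (hdims : ∀ u ∈ s, C.vdim u ≤ C.vdim p) {v : C.V} (hv : v ∈ s) :
    C.Reach q (C.pos v) := by
  classical
  obtain ⟨hqp, s', hs', hq', hp'⟩ := hadj
  have hedgeqp : ({q, p} : Finset C.V) ∈ C.simplices := by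
    apply C.down_closed s' hs' _ _ ⟨q, Finset.mem_insert_self q {p}⟩
    intro z hz
    rcases Finset.mem_insert.mp hz with rfl | h
    · exact hq'
    · rw [Finset.mem_singleton.mp h]; exact hp'
  have hreachp : C.Reach q (C.pos p) := C.reach_edge hedgeqp hval (C.reach_self q)
  by_cases hvq : v = q
  · subst hvq; exact C.reach_self v
  by_cases hvp : v = p
  · subst hvp; exact hreachp
  have hAdjvp : C.Adj v p := ⟨hvp, s, hs, hv, hps⟩
  have hdne : C.vdim v ≠ C.vdim p := C.flag s hs v hv p hps hvp
  have hle : C.vdim v ≤ C.vdim p := hdims v hv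
  have hFvp : C.F v < C.F p := by
    by_cases h1 : C.vdim v + 1 = C.vdim p
    · by_contra hFv
      push_neg at hFv
      have hsub := (hDM p).2
      have hqmem : q ∈ {w | C.Adj p w ∧ C.vdim w + 1 = C.vdim p ∧ C.F p ≤ C.F w} :=
        ⟨⟨Ne.symm hqp, s', hs', hp', hq'⟩, hdim, le_of_lt hval⟩
      have hvmem : v ∈ {w | C.Adj p w ∧ C.vdim w + 1 = C.vdim p ∧ C.F p ≤ C.F w} :=
        ⟨⟨Ne.symm hvp, s, hs, hps, hv⟩, h1, hFv⟩
      exact hvq (hsub hvmem hqmem)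
    · exact htame v p hAdjvp (by omega)
  have hedgepv : ({p, v} : Finset C.V) ∈ C.simplices := by
    apply C.down_closed s hs _ _ ⟨p, Finset.mem_insert_self p {v}⟩
    intro z hz
    rcases Finset.mem_insert.mp hz with rfl | h
    · exact hps
    · rw [Finset.mem_singleton.mp h]; exact hv
  exact C.reach_edge hedgepv hFvp hreachp

lemma reach_of_mem_geom (hgen : C.Generic) {q : C.V} :
    ∀ n (s : Finset C.V), s ∈ C.simplices → s.card ≤ n →
      (∀ v ∈ s, C.Reach q (C.pos v)) → ∀ x ∈ C.geom s, C.Reach q x := by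
  intro n
  induction n with
  | zero =>
    intro s hs hcard _ x _
    exact absurd (Finset.card_pos.mpr (C.nonempty_mem s hs)) (by omega)
  | succ n ih =>
    intro s hs hcard hvreach x hx
    rcases le_or_gt s.card 1 with h1 | h2
    · have hc1 : s.card = 1 := by
        have := Finset.card_pos.mpr (C.nonempty_mem s hs); omega
      obtain ⟨v, rfl⟩ := Finset.card_eq_one.mp hc1
      have hg : C.geom {v} = {C.pos v} := by
        unfold geom
        rw [Finset.coe_singleton, Set.image_singleton, convexHull_singleton]
      rw [hg] at hx
      rw [Set.mem_singleton_iff.mp hx]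
      exact hvreach v (Finset.mem_singleton_self v)
    · obtain ⟨u, hu⟩ := C.exists_negGrad hs
      obtain ⟨a, ha, b, hb, hab⟩ := Finset.one_lt_card.mp h2
      have hune : u ≠ 0 := by
        rintro rfl
        have h := hu.2 a ha b hb
        simp only [inner_zero_left] at h
        exact hgen a b ⟨hab, s, hs, ha, hb⟩ (by linarith)
      obtain ⟨v, hvs, r₀, hr₀, hy⟩ := C.exit_lemma hs hu hune hx
      have herase_ne : (s.erase v).Nonempty := by
        rw [← Finset.card_pos, Finset.card_erase_of_mem hvs]; omega
      have herase_mem : s.erase v ∈ C.simplices :=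
        C.down_closed s hs _ (Finset.erase_subset v s) herase_ne
      have hcard' : (s.erase v).card ≤ n := by
        rw [Finset.card_erase_of_mem hvs]; omega
      have hyreach : C.Reach q (x - r₀ • u) :=
        ih _ herase_mem hcard' (fun w hw => hvreach w (Finset.mem_of_mem_erase hw)) _ hy
      have hxe : (x - r₀ • u) + r₀ • u = x := sub_add_cancel x _
      have hstep := Reach.step C hyreach hs hu hr₀
        (C.geom_mono (Finset.erase_subset v s) hy) (by rw [hxe]; exact hx)
      rwa [hxe] at hstep

end PLComplex

/-- Lemma 10.3: With a tame generic discrete Morse function and a sharp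
metric, let `q` be an `(i−1)`-dimensional vertex and `p` an adjacent `i`-dimensional
vertex with `f(q) > f(p)`.  Then the cell `σ_p` of `X` corresponding to `p` is entirely
swept by the gradient trajectories starting at `q`. -/
theorem stmt18 (C : PLComplex)
    (hDM : C.IsDiscreteMorse) (hgen : C.Generic) (htame : C.Tame) (hsharp : C.Sharp)
    (p q : C.V) (hadj : C.Adj q p) (hdim : C.vdim q + 1 = C.vdim p)
    (hval : C.F p < C.F q) :
    ∀ x ∈ C.cellOf p,
      ∃ (k : ℕ) (t : ℕ → ℝ) (γ : ℝ → EuclideanSpace ℝ (Fin C.N)),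
        C.IsTraj k t γ ∧ γ (t 0) = C.pos q ∧ γ (t k) = x := by
  intro x hx
  simp only [PLComplex.cellOf, Set.mem_iUnion, Set.mem_setOf_eq] at hx
  obtain ⟨s, ⟨hs, hps, hdims⟩, hxs⟩ := hx
  have h := C.reach_of_mem_geom hgen s.card s hs le_rfl
    (fun v hv => C.reach_vertex hDM hgen htame hadj hdim hval hs hps hdims hv) x hxs
  obtain ⟨k, t, γ, h1, h2, h3⟩ := h
  exact ⟨k, t, γ, h1, h2, h3⟩
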